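/- Let (R_n)_{n≥0} be a cyclic urn process with m types started with one ball of type 0. Then for every k ∈ {0,…,m−1}, the complex-valued process (M_{k,n})_{n≥0} is a centered martingale with respect to the filtration (𝓕_n)_{n≥0}; that is, E[M_{k,n}] = 0 for all n and E[M_{k,n+1} ∣ 𝓕_n] = M_{k,n} almost surely for all n ≥ 0. -/

import Mathlib

open MeasureTheory ProbabilityTheory Filter Complex Finset Topology

noncomputable section

/-- `ω = exp(2πi/m)`, the `m`-th elementary root of unity. -/
def cw (m : ℕ) : ℂ := Complex.exp (2 * Real.pi * Complex.I / m)

/-- `λ_k = cos(2πk/m)`. -/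
def lam (m k : ℕ) : ℝ := Real.cos (2 * Real.pi * k / m)

/-- `μ_k = sin(2πk/m)`. -/
def muim (m k : ℕ) : ℝ := Real.sin (2 * Real.pi * k / m)

/-- the eigenvector `v_k = (1/m)(1, ω^{-k}, …, ω^{-(m-1)k})`. -/
def vvec (m k : ℕ) : Fin m → ℂ :=
  fun t => (m : ℂ)⁻¹ * cw m ^ (-((k * (t : ℕ) : ℕ) : ℤ))

/-- the dual coefficient `u_k(w) = ∑_t ω^{kt} w_t`. -/
def ucoef (m k : ℕ) (w : Fin m → ℝ) : ℂ :=
  ∑ t : Fin m, cw m ^ (k * (t : ℕ)) * (w t : ℂ)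

/-- the replacement matrix `A` of the cyclic urn. -/
def repA (m : ℕ) : Matrix (Fin m) (Fin m) ℝ :=
  Matrix.of fun i j => if (j : ℕ) = ((i : ℕ) + 1) % m then 1 else 0

/-- the filtration `𝓕_n = σ(R_0, …, R_n)`. -/
def urnFilt {Ω : Type*} [MeasurableSpace Ω] (m : ℕ) (R : ℕ → Ω → Fin m → ℝ) (n : ℕ) :
    MeasurableSpace Ω :=
  ⨆ i ∈ Finset.range (n + 1), MeasurableSpace.comap (R i) inferInstance

/-- A cyclic urn process with `m` types started with one ball of type `j0`. -/
structure IsCyclicUrn {Ω : Type*} [MeasurableSpace Ω] (μ : Measure Ω) (m : ℕ) (j0 : Fin m)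
    (R : ℕ → Ω → Fin m → ℝ) : Prop where
  isProb : IsProbabilityMeasure μ
  meas : ∀ n, Measurable (R n)
  natVal : ∀ n ω i, ∃ z : ℕ, R n ω i = z
  init : ∀ ω, R 0 ω = fun i => if i = j0 then 1 else 0
  step : ∀ n, ∀ j : Fin m,
    μ[Set.indicator {ω | R (n + 1) ω =
        fun i => R n ω i + if (i : ℕ) = ((j : ℕ) + 1) % m then 1 else 0}
      (fun _ => (1 : ℝ)) | urnFilt m R n]
      =ᵐ[μ] fun ω => R n ω j / (n + 1)

/-- componentwise expectation `E[X]` of a random vector. -/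
def expVec {Ω : Type*} [MeasurableSpace Ω] (μ : Measure Ω) {m : ℕ}
    (X : Ω → Fin m → ℝ) : Fin m → ℝ := fun i => ∫ ω, X ω i ∂μ

/-- the martingale `M_{k,n} = (Γ(n+1)/Γ(n+1+ω^k)) u_k(R_n - E[R_n])`, with `M_{k,0} = 0`. -/
def Mart {Ω : Type*} [MeasurableSpace Ω] (μ : Measure Ω) (m k : ℕ)
    (R : ℕ → Ω → Fin m → ℝ) (n : ℕ) (ω : Ω) : ℂ :=
  if n = 0 then 0
  else (Complex.Gamma ((n : ℂ) + 1) / Complex.Gamma ((n : ℂ) + 1 + cw m ^ k)) *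
    ucoef m k (fun t => R n ω t - expVec μ (R n) t)

/-- `ν` is the centered Gaussian distribution `𝒩(0, S)` on `ℝ^d` (Cramér–Wold
characterization: every linear functional is one-dimensional centered Gaussian). -/
def IsCenteredGaussian {d : ℕ} (ν : Measure (Fin d → ℝ)) (S : Matrix (Fin d) (Fin d) ℝ) : Prop :=
  IsProbabilityMeasure ν ∧
  ∀ l : Fin d → ℝ,
    ν.map (fun x => ∑ i, l i * x i) =
      gaussianReal 0 (Real.toNNReal (∑ i, ∑ j, l i * S i j * l j))

/-- convergence in distribution of the random vectors `X_n` to the law `ν`. -/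
def TendstoInDist {Ω : Type*} [MeasurableSpace Ω] (μ : Measure Ω) {d : ℕ}
    (X : ℕ → Ω → Fin d → ℝ) (ν : Measure (Fin d → ℝ)) : Prop :=
  ∀ f : BoundedContinuousFunction (Fin d → ℝ) ℝ,
    Tendsto (fun n => ∫ ω, f (X n ω) ∂μ) atTop (𝓝 (∫ x, f x ∂ν))


namespace StmtAux


-- basic root of unity facts
lemma cw_pow_m {m : ℕ} (hm : 0 < m) : cw m ^ m = 1 := by
  rw [cw, ← Complex.exp_nat_mul]
  have hm' : (m : ℂ) ≠ 0 := Nat.cast_ne_zero.2 hm.ne'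
  rw [show (m : ℂ) * (2 * Real.pi * Complex.I / m) = 2 * Real.pi * Complex.I by
    field_simp]
  exact Complex.exp_two_pi_mul_I

lemma cw_pow_mod {m : ℕ} (hm : 0 < m) (a : ℕ) : cw m ^ a = cw m ^ (a % m) := by
  conv_lhs => rw [← Nat.div_add_mod a m]
  rw [pow_add, pow_mul, cw_pow_m hm, one_pow, one_mul]

lemma cw_pow_eq_exp {m : ℕ} (hm : 0 < m) (k : ℕ) :
    cw m ^ k = Complex.exp ((2 * Real.pi * k / m : ℝ) * Complex.I) := by
  rw [cw, ← Complex.exp_nat_mul]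
  congr 1
  have hm' : (m : ℂ) ≠ 0 := Nat.cast_ne_zero.2 hm.ne'
  push_cast
  field_simp

lemma cw_pow_re {m : ℕ} (hm : 0 < m) (k : ℕ) :
    (cw m ^ k).re = Real.cos (2 * Real.pi * k / m) := by
  rw [cw_pow_eq_exp hm k, Complex.exp_ofReal_mul_I_re]

lemma re_pos_aux {m : ℕ} (hm : 0 < m) (k n : ℕ) (hn : 1 ≤ n) :
    0 < ((n : ℂ) + 1 + cw m ^ k).re := by
  simp only [Complex.add_re, Complex.natCast_re, Complex.one_re, cw_pow_re hm]
  have := Real.neg_one_le_cos (2 * Real.pi * k / m)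
  have : (-1 : ℝ) ≤ Real.cos (2 * Real.pi * k / m) := this
  have hn' : (1 : ℝ) ≤ (n : ℝ) := by exact_mod_cast hn
  linarith



def Aset {Ω : Type*} (m : ℕ) (R : ℕ → Ω → Fin m → ℝ) (n : ℕ) (j : Fin m) : Set Ω :=
  {ω | R (n + 1) ω = fun i => R n ω i + if (i : ℕ) = ((j : ℕ) + 1) % m then 1 else 0}

variable {Ω : Type*} [mΩ : MeasurableSpace Ω] {μ : Measure Ω} {m : ℕ}
  {R : ℕ → Ω → Fin m → ℝ} {j0 : Fin m}

lemma filt_le (hR : IsCyclicUrn μ m j0 R) (n : ℕ) : urnFilt m R n ≤ mΩ := by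
  refine iSup₂_le fun i _ => ?_
  exact (hR.meas i).comap_le

lemma measR_filt (hR : IsCyclicUrn μ m j0 R) (n : ℕ) :
    Measurable[urnFilt m R n] (R n) := by
  have h : MeasurableSpace.comap (R n) inferInstance ≤ urnFilt m R n :=
    le_iSup₂ (f := fun i (_ : i ∈ Finset.range (n + 1)) =>
      MeasurableSpace.comap (R i) inferInstance) n (Finset.self_mem_range_succ n)
  exact measurable_iff_comap_le.2 h

lemma measR_coord_filt (hR : IsCyclicUrn μ m j0 R) (n : ℕ) (t : Fin m) :
    Measurable[urnFilt m R n] (fun ω => R n ω t) :=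
  (measurable_pi_apply t).comp (measR_filt hR n)

lemma sm_coord_filt (hR : IsCyclicUrn μ m j0 R) (n : ℕ) (t : Fin m) :
    StronglyMeasurable[urnFilt m R n] (fun ω => R n ω t) :=
  (measR_coord_filt hR n t).stronglyMeasurable

lemma meas_coord (hR : IsCyclicUrn μ m j0 R) (n : ℕ) (t : Fin m) :
    Measurable (fun ω => R n ω t) :=
  (measurable_pi_apply t).comp (hR.meas n)

lemma Aset_measurable (hR : IsCyclicUrn μ m j0 R) (n : ℕ) (j : Fin m) :
    MeasurableSet (Aset m R n j) :=
  MeasureTheory.StronglyMeasurable.measurableSet_eq_fun (hR.meas (n+1)).stronglyMeasurable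
    (Measurable.stronglyMeasurable (f := fun ω (i : Fin m) => R n ω i + if (i : ℕ) = ((j : ℕ) + 1) % m then 1 else 0) (by
      refine measurable_pi_lambda _ fun i => ?_
      exact (meas_coord hR n i).add_const _))

lemma R_nonneg (hR : IsCyclicUrn μ m j0 R) (n : ℕ) (ω : Ω) (t : Fin m) :
    0 ≤ R n ω t := by
  obtain ⟨z, hz⟩ := hR.natVal n ω t
  rw [hz]; positivity

-- injectivity of successor mod m
lemma succ_mod_inj {j j' : Fin m} (h : ((j : ℕ) + 1) % m = ((j' : ℕ) + 1) % m) : j = j' := by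
  have hj := j.isLt
  have hj' := j'.isLt
  have h1 : ((j : ℕ) + 1) % m = if (j : ℕ) + 1 = m then 0 else (j : ℕ) + 1 := by
    split
    · simp [*]
    · exact Nat.mod_eq_of_lt (by omega)
  have h2 : ((j' : ℕ) + 1) % m = if (j' : ℕ) + 1 = m then 0 else (j' : ℕ) + 1 := by
    split
    · simp [*]
    · exact Nat.mod_eq_of_lt (by omega)
  rw [h1, h2] at h
  apply Fin.ext
  split at h <;> split at h <;> omega

lemma Aset_disjoint {n : ℕ} {j j' : Fin m} (hjj : j ≠ j') {ω : Ω}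
    (h : ω ∈ Aset m R n j) (h' : ω ∈ Aset m R n j') : False := by
  have hm0 : 0 < m := j.pos
  have heq := h.symm.trans h'
  have h3 := congrFun heq ⟨((j : ℕ) + 1) % m, Nat.mod_lt _ hm0⟩
  have hne : ((j : ℕ) + 1) % m ≠ ((j' : ℕ) + 1) % m := fun hc => hjj (succ_mod_inj hc)
  simp only [Fin.val_mk, if_pos rfl, if_true, if_neg hne] at h3
  linarith

/-- predecessor in the cycle -/
def jp (m : ℕ) (hm : 0 < m) (t : Fin m) : Fin m :=
  ⟨((t : ℕ) + m - 1) % m, Nat.mod_lt _ hm⟩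

lemma jp_succ (hm : 0 < m) (t : Fin m) : ((jp m hm t : ℕ) + 1) % m = (t : ℕ) := by
  have ht := t.isLt
  simp only [jp]
  rw [Nat.mod_add_mod]
  have : (t : ℕ) + m - 1 + 1 = (t : ℕ) + m := by omega
  rw [this, Nat.add_mod_right, Nat.mod_eq_of_lt ht]

lemma jp_eq_iff (hm : 0 < m) (t j : Fin m) :
    jp m hm t = j ↔ ((j : ℕ) + 1) % m = (t : ℕ) := by
  constructor
  · rintro rfl; exact jp_succ hm t
  · intro h
    exact succ_mod_inj (by rw [jp_succ hm t, h])

-- the sum of indicators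
lemma indicator_sum_eq (hR : IsCyclicUrn μ m j0 R) (n : ℕ) (ω : Ω) :
    (¬ (∃ j, ω ∈ Aset m R n j) →
      ∑ j : Fin m, (Aset m R n j).indicator (fun _ => (1 : ℝ)) ω = 0) ∧
    (∀ j₀, ω ∈ Aset m R n j₀ →
      ∑ j : Fin m, (Aset m R n j).indicator (fun _ => (1 : ℝ)) ω = 1) := by
  constructor
  · intro hne
    refine Finset.sum_eq_zero fun j _ => ?_
    exact Set.indicator_of_notMem (fun hmem => hne ⟨j, hmem⟩) _
  · intro j₀ hj₀
    rw [Finset.sum_eq_single j₀]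
    · exact Set.indicator_of_mem hj₀ _
    · intro j _ hjne
      exact Set.indicator_of_notMem (fun hmem => Aset_disjoint hjne hmem hj₀) _
    · intro h; exact absurd (Finset.mem_univ j₀) h

lemma integrable_indicator_Aset (hR : IsCyclicUrn μ m j0 R) (n : ℕ) (j : Fin m) :
    Integrable ((Aset m R n j).indicator (fun _ => (1 : ℝ))) μ := by
  haveI := hR.isProb
  exact (integrable_const (1 : ℝ)).indicator (Aset_measurable hR n j)

lemma integrable_coord (hR : IsCyclicUrn μ m j0 R) {n : ℕ}
    (hmass : ∀ᵐ ω ∂μ, ∑ t : Fin m, R n ω t = n + 1) (t : Fin m) :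
    Integrable (fun ω => R n ω t) μ := by
  haveI := hR.isProb
  refine Integrable.mono' (integrable_const ((n : ℝ) + 1))
    (meas_coord hR n t).aestronglyMeasurable ?_
  filter_upwards [hmass] with ω hω
  rw [Real.norm_eq_abs, _root_.abs_of_nonneg (R_nonneg hR n ω t)]
  calc R n ω t ≤ ∑ s : Fin m, R n ω s :=
        Finset.single_le_sum (fun s _ => R_nonneg hR n ω s) (Finset.mem_univ t)
    _ = n + 1 := hω

lemma step_sum_one (hR : IsCyclicUrn μ m j0 R) (n : ℕ)
    (hmass : ∀ᵐ ω ∂μ, ∑ t : Fin m, R n ω t = n + 1) :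
    ∀ᵐ ω ∂μ, ∃ j, ω ∈ Aset m R n j := by
  haveI := hR.isProb
  have hle := filt_le hR n
  haveI : IsFiniteMeasure (μ.trim hle) := isFiniteMeasure_trim hle
  set g : Ω → ℝ := fun ω => ∑ j : Fin m, (Aset m R n j).indicator (fun _ => (1 : ℝ)) ω with hg
  have hgint : Integrable g μ :=
    integrable_finset_sum _ fun j _ => integrable_indicator_Aset hR n j
  have hint_each : ∀ j : Fin m, ∫ ω, (Aset m R n j).indicator (fun _ => (1 : ℝ)) ω ∂μ
      = ∫ ω, R n ω j / (n + 1) ∂μ := by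
    intro j
    rw [← integral_condExp hle (f := (Aset m R n j).indicator (fun _ => (1 : ℝ)))]
    exact integral_congr_ae (hR.step n j)
  have hintg : ∫ ω, g ω ∂μ = ∫ ω, (1 : ℝ) ∂μ := by
    rw [show (fun ω => g ω) = g from rfl, hg]
    rw [integral_finset_sum _ (fun j _ => integrable_indicator_Aset hR n j)]
    simp_rw [hint_each]
    rw [← integral_finset_sum _ (fun (j : Fin m) _ => (integrable_coord hR hmass j).div_const ((n : ℝ) + 1))]
    apply integral_congr_ae
    filter_upwards [hmass] with ω hω
    rw [← Finset.sum_div, hω]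
    have : ((n : ℝ) + 1) ≠ 0 := by positivity
    field_simp
  have hle1 : g ≤ᵐ[μ] fun _ => (1 : ℝ) := ae_of_all _ fun ω => by
    show ∑ j : Fin m, (Aset m R n j).indicator (fun _ => (1 : ℝ)) ω ≤ 1
    by_cases hex : ∃ j, ω ∈ Aset m R n j
    · obtain ⟨j₀, hj₀⟩ := hex
      rw [(indicator_sum_eq hR n ω).2 j₀ hj₀]
    · rw [(indicator_sum_eq hR n ω).1 hex]; norm_num
  have hone := (integral_eq_iff_of_ae_le hgint (integrable_const 1) hle1).1 hintg
  filter_upwards [hone] with ω hω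
  by_contra hex
  have hω' : ∑ j : Fin m, (Aset m R n j).indicator (fun _ => (1 : ℝ)) ω = 1 := hω
  rw [(indicator_sum_eq hR n ω).1 hex] at hω'
  norm_num at hω' 

lemma mass (hR : IsCyclicUrn μ m j0 R) (hm0 : 0 < m) :
    ∀ n, ∀ᵐ ω ∂μ, ∑ t : Fin m, R n ω t = n + 1 := by
  intro n
  induction n with
  | zero =>
    refine ae_of_all _ fun ω => ?_
    rw [hR.init ω]
    simp
  | succ n ih =>
    filter_upwards [ih, step_sum_one hR n ih] with ω h1 h2
    obtain ⟨j, hj⟩ := h2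
    have hj' : R (n + 1) ω = fun i => R n ω i + if (i : ℕ) = ((j : ℕ) + 1) % m then 1 else 0 := hj
    rw [hj', Finset.sum_add_distrib, h1]
    have : ∑ t : Fin m, (if (t : ℕ) = ((j : ℕ) + 1) % m then (1 : ℝ) else 0) = 1 := by
      rw [Finset.sum_eq_single (⟨((j : ℕ) + 1) % m, Nat.mod_lt _ hm0⟩ : Fin m)]
      · simp
      · intro t _ hne
        exact if_neg (fun h => hne (Fin.ext h))
      · simp
    rw [this]
    push_cast
    ring

lemma coord_ae (hR : IsCyclicUrn μ m j0 R) (hm0 : 0 < m) (n : ℕ) :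
    ∀ᵐ ω ∂μ, ∀ t : Fin m, R (n + 1) ω t
      = R n ω t + (Aset m R n (jp m hm0 t)).indicator (fun _ => (1 : ℝ)) ω := by
  filter_upwards [step_sum_one hR n (mass hR hm0 n)] with ω hex t
  obtain ⟨j, hj⟩ := hex
  have hjt := congrFun (show R (n + 1) ω = _ from hj) t
  by_cases hcase : jp m hm0 t = j
  · rw [Set.indicator_of_mem (hcase ▸ hj : ω ∈ Aset m R n (jp m hm0 t))]
    rw [hjt, if_pos]
    subst hcase
    exact (jp_succ hm0 t).symm
  · have hnot : ω ∉ Aset m R n (jp m hm0 t) := fun hmem => Aset_disjoint hcase hmem hj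
    rw [Set.indicator_of_notMem hnot, hjt, if_neg, add_zero]
    intro hc
    exact hcase ((jp_eq_iff hm0 t j).2 hc.symm)

lemma condexp_coord (hR : IsCyclicUrn μ m j0 R) (hm0 : 0 < m) (n : ℕ) (t : Fin m) :
    μ[(fun ω => R (n + 1) ω t) | urnFilt m R n] =ᵐ[μ]
      fun ω => R n ω t + R n ω (jp m hm0 t) / (n + 1) := by
  haveI := hR.isProb
  have hle := filt_le hR n
  haveI : IsFiniteMeasure (μ.trim hle) := isFiniteMeasure_trim hle
  have h1 : (fun ω => R (n + 1) ω t) =ᵐ[μ]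
      (fun ω => R n ω t) + ((Aset m R n (jp m hm0 t)).indicator (fun _ => (1 : ℝ))) := by
    filter_upwards [coord_ae hR hm0 n] with ω hω
    exact hω t
  have h2 := condExp_congr_ae (m := urnFilt m R n) (μ := μ) h1
  have h3 := condExp_add (m := urnFilt m R n) (μ := μ)
    (integrable_coord hR (mass hR hm0 n) t)
    (integrable_indicator_Aset hR n (jp m hm0 t))
  have h4 : μ[(fun ω => R n ω t) | urnFilt m R n] = fun ω => R n ω t :=
    condExp_of_stronglyMeasurable hle (sm_coord_filt hR n t)
      (integrable_coord hR (mass hR hm0 n) t)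
  have h5 := hR.step n (jp m hm0 t)
  refine h2.trans (h3.trans ?_)
  rw [h4]
  filter_upwards [h5] with ω hω
  show R n ω t + (μ[(Aset m R n (jp m hm0 t)).indicator fun _ => (1:ℝ)|urnFilt m R n]) ω = _
  exact congrArg (fun x => R n ω t + x) hω

lemma expVec_succ (hR : IsCyclicUrn μ m j0 R) (hm0 : 0 < m) (n : ℕ) (t : Fin m) :
    expVec μ (R (n + 1)) t
      = expVec μ (R n) t + expVec μ (R n) (jp m hm0 t) / (n + 1) := by
  haveI := hR.isProb
  have hle := filt_le hR n
  haveI : IsFiniteMeasure (μ.trim hle) := isFiniteMeasure_trim hle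
  show ∫ ω, R (n + 1) ω t ∂μ = _
  rw [← integral_condExp hle (f := fun ω => R (n + 1) ω t),
    integral_congr_ae (condexp_coord hR hm0 n t),
    integral_add (integrable_coord hR (mass hR hm0 n) t)
      ((integrable_coord hR (mass hR hm0 n) (jp m hm0 t)).div_const _),
    integral_div]
  rfl

lemma condexp_ofReal' {Ω : Type*} {mm m0 : MeasurableSpace Ω} {μ : Measure Ω}
    (hle : mm ≤ m0) [SigmaFinite (μ.trim hle)]
    {f : Ω → ℝ} (hf : Integrable f μ) :
    μ[(fun ω => ((f ω : ℝ) : ℂ)) | mm] =ᵐ[μ] fun ω => (((μ[f | mm]) ω : ℝ) : ℂ) := by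
  have hint : Integrable (fun ω => ((f ω : ℝ) : ℂ)) μ := by
    simpa only [Complex.ofRealCLM_apply] using Complex.ofRealCLM.integrable_comp hf
  have hgint : Integrable (fun ω => (((μ[f | mm]) ω : ℝ) : ℂ)) μ := by
    simpa only [Complex.ofRealCLM_apply] using
      Complex.ofRealCLM.integrable_comp (integrable_condExp (f := f))
  have hsm : StronglyMeasurable[mm] (fun ω => (((μ[f | mm]) ω : ℝ) : ℂ)) :=
    Complex.continuous_ofReal.comp_stronglyMeasurable
      (stronglyMeasurable_condExp (f := f) (m := mm))
  have hsm' : AEStronglyMeasurable[mm] (fun ω => (((μ[f | mm]) ω : ℝ) : ℂ)) μ :=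
    hsm.aestronglyMeasurable
  have key : ∀ s : Set Ω, MeasurableSet[mm] s → μ s < ⊤ →
      ∫ x in s, (((μ[f | mm]) x : ℝ) : ℂ) ∂μ = ∫ x in s, ((f x : ℝ) : ℂ) ∂μ := by
    intro s hs hμs
    have hi1 : Integrable (μ[f | mm]) (μ.restrict s) := integrable_condExp.integrableOn
    have hi2 : Integrable f (μ.restrict s) := hf.integrableOn
    have h1 := Complex.ofRealCLM.integral_comp_comm hi1
    have h2 := Complex.ofRealCLM.integral_comp_comm hi2
    simp only [Complex.ofRealCLM_apply] at h1 h2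
    rw [h1, h2, setIntegral_condExp hle hf hs]
  exact (ae_eq_condExp_of_forall_setIntegral_eq hle hint
    (fun s _ _ => hgint.integrableOn) key hsm').symm

lemma gamma_ratio (hm0 : 0 < m) (k n : ℕ) (hn : 1 ≤ n) :
    Complex.Gamma ((n : ℂ) + 1 + 1) / Complex.Gamma ((n : ℂ) + 1 + 1 + cw m ^ k)
        * (((n : ℂ) + 1 + cw m ^ k) / ((n : ℂ) + 1))
      = Complex.Gamma ((n : ℂ) + 1) / Complex.Gamma ((n : ℂ) + 1 + cw m ^ k) := by
  set w := cw m ^ k with hw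
  have hre := re_pos_aux hm0 k n hn
  have hwne : ((n : ℂ) + 1 + w) ≠ 0 := fun hc => by rw [hc] at hre; simp at hre
  have hn1 : ((n : ℂ) + 1) ≠ 0 := by
    intro hc
    have : ((n : ℂ) + 1).re = 0 := by rw [hc]; simp
    simp only [Complex.add_re, Complex.natCast_re, Complex.one_re] at this
    have : (0 : ℝ) ≤ (n : ℝ) := Nat.cast_nonneg n
    linarith
  have h1 : Complex.Gamma ((n : ℂ) + 1 + 1) = ((n : ℂ) + 1) * Complex.Gamma ((n : ℂ) + 1) :=
    Complex.Gamma_add_one _ hn1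
  have h2 : Complex.Gamma ((n : ℂ) + 1 + 1 + w) = ((n : ℂ) + 1 + w) * Complex.Gamma ((n : ℂ) + 1 + w) := by
    have := Complex.Gamma_add_one ((n : ℂ) + 1 + w) hwne
    rw [show (n : ℂ) + 1 + 1 + w = (n : ℂ) + 1 + w + 1 by ring, this]
  have hG : Complex.Gamma ((n : ℂ) + 1 + w) ≠ 0 := Complex.Gamma_ne_zero_of_re_pos hre
  rw [h1, h2]
  field_simp

/-- index shift for the cyclic sum -/
lemma sum_shift (hm0 : 0 < m) (k : ℕ) (x : Fin m → ℂ) :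
    ∑ t : Fin m, cw m ^ (k * (t : ℕ)) * x (jp m hm0 t)
      = cw m ^ k * ∑ s : Fin m, cw m ^ (k * (s : ℕ)) * x s := by
  have hsc : ∀ s : Fin m, (((s : ℕ) + 1) % m) < m := fun s => Nat.mod_lt _ hm0
  let e : Fin m ≃ Fin m :=
    { toFun := fun s => ⟨((s : ℕ) + 1) % m, hsc s⟩
      invFun := jp m hm0
      left_inv := fun s => (jp_eq_iff hm0 ⟨((s : ℕ) + 1) % m, hsc s⟩ s).2 rfl
      right_inv := fun t => Fin.ext (jp_succ hm0 t) }
  have hre := (Equiv.sum_comp e (fun t => cw m ^ (k * (t : ℕ)) * x (jp m hm0 t))).symm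
  rw [hre]
  rw [Finset.mul_sum]
  refine Finset.sum_congr rfl fun s _ => ?_
  have hjp : jp m hm0 (e s) = s := e.left_inv s
  rw [hjp]
  have hmod : (k * (((s : ℕ) + 1) % m)) % m = (k * ((s : ℕ) + 1)) % m := by
    conv_rhs => rw [Nat.mul_mod]
    rw [Nat.mul_mod, Nat.mod_mod_of_dvd _ dvd_rfl]
  have hpow : cw m ^ (k * (((s : ℕ) + 1) % m)) = cw m ^ k * cw m ^ (k * (s : ℕ)) := by
    rw [cw_pow_mod hm0, hmod, ← cw_pow_mod hm0, Nat.mul_add, mul_one, pow_add, mul_comm]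
  show cw m ^ (k * (((s : ℕ) + 1) % m)) * x s = _
  rw [hpow]
  ring

lemma Mart_eq (k : ℕ) {n : ℕ} (hn : n ≠ 0) (ω : Ω) :
    Mart μ m k R n ω = ∑ t : Fin m,
      (Complex.Gamma ((n : ℂ) + 1) / Complex.Gamma ((n : ℂ) + 1 + cw m ^ k)
          * cw m ^ (k * (t : ℕ)))
        * ((R n ω t - expVec μ (R n) t : ℝ) : ℂ) := by
  rw [Mart, if_neg hn, ucoef, Finset.mul_sum]
  refine Finset.sum_congr rfl fun t _ => ?_
  push_cast
  ring

lemma integrable_centered (hR : IsCyclicUrn μ m j0 R) (hm0 : 0 < m) (n : ℕ) (t : Fin m) :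
    Integrable (fun ω => ((R n ω t - expVec μ (R n) t : ℝ) : ℂ)) μ := by
  haveI := hR.isProb
  have h := (integrable_coord hR (mass hR hm0 n) t).sub (integrable_const (expVec μ (R n) t))
  simpa only [Complex.ofRealCLM_apply, Pi.sub_apply] using Complex.ofRealCLM.integrable_comp h

lemma integral_Mart_zero (hR : IsCyclicUrn μ m j0 R) (hm0 : 0 < m) (k n : ℕ) :
    ∫ ω, Mart μ m k R n ω ∂μ = 0 := by
  haveI := hR.isProb
  rcases Nat.eq_zero_or_pos n with hn | hn
  · subst hn; simp [Mart]
  have hn' : n ≠ 0 := hn.ne'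
  rw [integral_congr_ae (ae_of_all _ (fun ω => Mart_eq k hn' ω))]
  rw [integral_finset_sum _ (fun t _ => ((integrable_centered hR hm0 n t).const_mul _))]
  refine Finset.sum_eq_zero fun t _ => ?_
  rw [integral_const_mul]
  have h1 := Complex.ofRealCLM.integral_comp_comm
    ((integrable_coord hR (mass hR hm0 n) t).sub (integrable_const (expVec μ (R n) t)))
  simp only [Complex.ofRealCLM_apply, Pi.sub_apply] at h1
  rw [h1]
  rw [integral_sub (integrable_coord hR (mass hR hm0 n) t) (integrable_const _)]
  have : ∫ ω, R n ω t ∂μ = expVec μ (R n) t := rfl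
  rw [this, integral_const]
  simp
lemma Mart_one_ae_zero (hR : IsCyclicUrn μ m j0 R) (hm0 : 0 < m) (k : ℕ) :
    Mart μ m k R 1 =ᵐ[μ] 0 := by
  haveI := hR.isProb
  have hle := filt_le hR 0
  haveI : IsFiniteMeasure (μ.trim hle) := isFiniteMeasure_trim hle
  -- for j ≠ j0 the event has measure zero
  have hzero : ∀ j : Fin m, j ≠ j0 → μ (Aset m R 0 j) = 0 := by
    intro j hj
    have hI : ∫ ω, (Aset m R 0 j).indicator (fun _ => (1 : ℝ)) ω ∂μ = 0 := by
      have h1 : ∫ ω, (Aset m R 0 j).indicator (fun _ => (1 : ℝ)) ω ∂μ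
          = ∫ ω, (μ[(Aset m R 0 j).indicator (fun _ => (1 : ℝ))|urnFilt m R 0]) ω ∂μ :=
        (integral_condExp hle).symm
      have h2 : ∫ ω, (μ[(Aset m R 0 j).indicator (fun _ => (1 : ℝ))|urnFilt m R 0]) ω ∂μ
          = ∫ ω, R 0 ω j / ((0 : ℕ) + 1) ∂μ := integral_congr_ae (hR.step 0 j)
      rw [h1, h2]
      rw [integral_congr_ae (ae_of_all _ (fun ω => show R 0 ω j / ((0:ℕ)+1) = (0:ℝ) by
        rw [hR.init ω]; simp [hj]))]
      exact integral_zero _ _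
    rw [integral_indicator (Aset_measurable hR 0 j)] at hI
    simp only [integral_const, smul_eq_mul, mul_one] at hI
    have hfin : μ (Aset m R 0 j) ≠ ⊤ := measure_ne_top μ _
    rw [measureReal_restrict_apply_univ] at hI
    exact (ENNReal.toReal_eq_zero_iff _).1 hI |>.resolve_right hfin
  have hnot : ∀ᵐ ω ∂μ, ∀ j : Fin m, j ≠ j0 → ω ∉ Aset m R 0 j := by
    rw [ae_all_iff]
    intro j
    by_cases hj : j = j0
    · exact ae_of_all _ fun ω h => absurd hj h
    · filter_upwards [(measure_eq_zero_iff_ae_notMem (μ := μ)).1 (hzero j hj)] with ω hω _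
      exact hω
  have hmem : ∀ᵐ ω ∂μ, ω ∈ Aset m R 0 j0 := by
    filter_upwards [hnot, step_sum_one hR 0 (mass hR hm0 0)] with ω h1 h2
    obtain ⟨j, hj⟩ := h2
    by_cases hc : j = j0
    · exact hc ▸ hj
    · exact absurd hj (h1 j hc)
  set r1 : Fin m → ℝ := fun i =>
    (if i = j0 then (1 : ℝ) else 0) + (if (i : ℕ) = ((j0 : ℕ) + 1) % m then 1 else 0) with hr1
  have hae : ∀ᵐ ω ∂μ, R 1 ω = r1 := by
    filter_upwards [hmem] with ω hω
    have h := (show R 1 ω = _ from hω)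
    rw [h, hR.init ω]
  have hexp : ∀ t : Fin m, expVec μ (R 1) t = r1 t := by
    intro t
    show ∫ ω, R 1 ω t ∂μ = r1 t
    rw [integral_congr_ae (hae.mono fun ω h => congrFun h t), integral_const]
    simp
  filter_upwards [hae] with ω hω
  rw [Mart, if_neg one_ne_zero]
  have h0 : (fun t => R 1 ω t - expVec μ (R 1) t) = fun _ => (0 : ℝ) := by
    funext t
    rw [congrFun hω t, hexp t, sub_self]
  rw [h0]
  simp [ucoef]
lemma main_step (hR : IsCyclicUrn μ m j0 R) (hm0 : 0 < m) (k : ℕ) {n : ℕ} (hn : 1 ≤ n) :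
    μ[Mart μ m k R (n + 1) | urnFilt m R n] =ᵐ[μ] Mart μ m k R n := by
  haveI := hR.isProb
  have hle := filt_le hR n
  haveI : IsFiniteMeasure (μ.trim hle) := isFiniteMeasure_trim hle
  have hn1 : ((n : ℂ) + 1) ≠ 0 := by
    intro hc
    have h := congrArg Complex.re hc
    simp only [Complex.add_re, Complex.natCast_re, Complex.one_re, Complex.zero_re] at h
    have : (0 : ℝ) ≤ (n : ℝ) := Nat.cast_nonneg n
    linarith
  have hcast : ((n + 1 : ℕ) : ℂ) = (n : ℂ) + 1 := by push_cast; ring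
  -- conditional expectation of the complexified centered coordinates
  have hcoordC : ∀ t : Fin m,
      μ[(fun ω => ((R (n + 1) ω t - expVec μ (R (n + 1)) t : ℝ) : ℂ)) | urnFilt m R n]
        =ᵐ[μ] fun ω =>
          ((R n ω t + R n ω (jp m hm0 t) / (n + 1) - expVec μ (R (n + 1)) t : ℝ) : ℂ) := by
    intro t
    have hfint : Integrable (fun ω => R (n + 1) ω t - expVec μ (R (n + 1)) t) μ :=
      (integrable_coord hR (mass hR hm0 (n + 1)) t).sub (integrable_const _)
    refine (condexp_ofReal' hle hfint).trans ?_
    have h1 : μ[(fun ω => R (n + 1) ω t - expVec μ (R (n + 1)) t) | urnFilt m R n]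
        =ᵐ[μ] fun ω => R n ω t + R n ω (jp m hm0 t) / (n + 1) - expVec μ (R (n + 1)) t := by
      have heq : (fun ω => R (n + 1) ω t - expVec μ (R (n + 1)) t)
          = (fun ω => R (n + 1) ω t) - (fun _ => expVec μ (R (n + 1)) t) := rfl
      rw [heq]
      refine (condExp_sub (integrable_coord hR (mass hR hm0 (n + 1)) t)
        (integrable_const _) (urnFilt m R n)).trans ?_
      have h4 : μ[(fun _ : Ω => expVec μ (R (n + 1)) t) | urnFilt m R n]
          = fun _ => expVec μ (R (n + 1)) t := condExp_const hle _
      filter_upwards [condexp_coord hR hm0 n t] with ω hω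
      rw [Pi.sub_apply, hω, h4]
    filter_upwards [h1] with ω hω
    rw [hω]
  -- expansion of Mart at time n+1
  have hexp : Mart μ m k R (n + 1) = ∑ t : Fin m, fun ω =>
      (Complex.Gamma ((n : ℂ) + 1 + 1) / Complex.Gamma ((n : ℂ) + 1 + 1 + cw m ^ k)
          * cw m ^ (k * (t : ℕ)))
        * ((R (n + 1) ω t - expVec μ (R (n + 1)) t : ℝ) : ℂ) := by
    funext ω
    rw [Finset.sum_apply, Mart_eq k (Nat.succ_ne_zero n) ω]
    refine Finset.sum_congr rfl fun t _ => ?_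
    rw [hcast]
  have hintD : ∀ t : Fin m, Integrable (fun ω =>
      (Complex.Gamma ((n : ℂ) + 1 + 1) / Complex.Gamma ((n : ℂ) + 1 + 1 + cw m ^ k)
          * cw m ^ (k * (t : ℕ)))
        * ((R (n + 1) ω t - expVec μ (R (n + 1)) t : ℝ) : ℂ)) μ :=
    fun t => (integrable_centered hR hm0 (n + 1) t).const_mul _
  have hstep1 : μ[Mart μ m k R (n + 1) | urnFilt m R n] =ᵐ[μ]
      ∑ t : Fin m, μ[(fun ω =>
        (Complex.Gamma ((n : ℂ) + 1 + 1) / Complex.Gamma ((n : ℂ) + 1 + 1 + cw m ^ k)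
            * cw m ^ (k * (t : ℕ)))
          * ((R (n + 1) ω t - expVec μ (R (n + 1)) t : ℝ) : ℂ)) | urnFilt m R n] := by
    rw [hexp]
    exact condExp_finsetSum (fun t _ => hintD t) (urnFilt m R n)
  have hstep2 : ∀ t : Fin m, μ[(fun ω =>
      (Complex.Gamma ((n : ℂ) + 1 + 1) / Complex.Gamma ((n : ℂ) + 1 + 1 + cw m ^ k)
          * cw m ^ (k * (t : ℕ)))
        * ((R (n + 1) ω t - expVec μ (R (n + 1)) t : ℝ) : ℂ)) | urnFilt m R n]
      =ᵐ[μ] fun ω =>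
        (Complex.Gamma ((n : ℂ) + 1 + 1) / Complex.Gamma ((n : ℂ) + 1 + 1 + cw m ^ k)
            * cw m ^ (k * (t : ℕ)))
          * ((R n ω t + R n ω (jp m hm0 t) / (n + 1) - expVec μ (R (n + 1)) t : ℝ) : ℂ) := by
    intro t
    have hsmul : (fun ω =>
        (Complex.Gamma ((n : ℂ) + 1 + 1) / Complex.Gamma ((n : ℂ) + 1 + 1 + cw m ^ k)
            * cw m ^ (k * (t : ℕ)))
          * ((R (n + 1) ω t - expVec μ (R (n + 1)) t : ℝ) : ℂ))
        = (Complex.Gamma ((n : ℂ) + 1 + 1) / Complex.Gamma ((n : ℂ) + 1 + 1 + cw m ^ k)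
            * cw m ^ (k * (t : ℕ)))
          • (fun ω => ((R (n + 1) ω t - expVec μ (R (n + 1)) t : ℝ) : ℂ)) := rfl
    rw [hsmul]
    refine (condExp_smul _ _ (urnFilt m R n)).trans ?_
    filter_upwards [hcoordC t] with ω hω
    rw [Pi.smul_apply, hω, smul_eq_mul]
  have hall : ∀ᵐ ω ∂μ, ∀ t : Fin m, (μ[(fun ω' =>
      (Complex.Gamma ((n : ℂ) + 1 + 1) / Complex.Gamma ((n : ℂ) + 1 + 1 + cw m ^ k)
          * cw m ^ (k * (t : ℕ)))
        * ((R (n + 1) ω' t - expVec μ (R (n + 1)) t : ℝ) : ℂ)) | urnFilt m R n]) ω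
      = (Complex.Gamma ((n : ℂ) + 1 + 1) / Complex.Gamma ((n : ℂ) + 1 + 1 + cw m ^ k)
          * cw m ^ (k * (t : ℕ)))
        * ((R n ω t + R n ω (jp m hm0 t) / (n + 1) - expVec μ (R (n + 1)) t : ℝ) : ℂ) :=
    ae_all_iff.2 fun t => hstep2 t
  refine hstep1.trans ?_
  filter_upwards [hall] with ω hω
  rw [Finset.sum_apply, Finset.sum_congr rfl (fun t _ => hω t)]
  -- now pure algebra
  have hterm : ∀ t : Fin m,
      (Complex.Gamma ((n : ℂ) + 1 + 1) / Complex.Gamma ((n : ℂ) + 1 + 1 + cw m ^ k)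
          * cw m ^ (k * (t : ℕ)))
        * ((R n ω t + R n ω (jp m hm0 t) / (n + 1) - expVec μ (R (n + 1)) t : ℝ) : ℂ)
      = Complex.Gamma ((n : ℂ) + 1 + 1) / Complex.Gamma ((n : ℂ) + 1 + 1 + cw m ^ k)
          * (cw m ^ (k * (t : ℕ)) * ((R n ω t - expVec μ (R n) t : ℝ) : ℂ))
        + Complex.Gamma ((n : ℂ) + 1 + 1)
            / Complex.Gamma ((n : ℂ) + 1 + 1 + cw m ^ k) / ((n : ℂ) + 1)
          * (cw m ^ (k * (t : ℕ))
            * ((R n ω (jp m hm0 t) - expVec μ (R n) (jp m hm0 t) : ℝ) : ℂ)) := by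
    intro t
    rw [expVec_succ hR hm0 n t]
    push_cast
    ring
  rw [Finset.sum_congr rfl (fun t _ => hterm t), Finset.sum_add_distrib,
    ← Finset.mul_sum, ← Finset.mul_sum,
    sum_shift hm0 k (fun t => ((R n ω t - expVec μ (R n) t : ℝ) : ℂ))]
  have hMart : Mart μ m k R n ω
      = Complex.Gamma ((n : ℂ) + 1) / Complex.Gamma ((n : ℂ) + 1 + cw m ^ k)
        * ∑ t : Fin m, cw m ^ (k * (t : ℕ)) * ((R n ω t - expVec μ (R n) t : ℝ) : ℂ) := by
    rw [Mart_eq k (Nat.one_le_iff_ne_zero.1 hn) ω, Finset.mul_sum]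
    exact Finset.sum_congr rfl fun t _ => by ring
  rw [hMart]
  have hg := gamma_ratio hm0 k n hn
  have hg3 : Complex.Gamma ((n : ℂ) + 1 + 1) / Complex.Gamma ((n : ℂ) + 1 + 1 + cw m ^ k)
      + Complex.Gamma ((n : ℂ) + 1 + 1)
          / Complex.Gamma ((n : ℂ) + 1 + 1 + cw m ^ k) / ((n : ℂ) + 1) * cw m ^ k
      = Complex.Gamma ((n : ℂ) + 1) / Complex.Gamma ((n : ℂ) + 1 + cw m ^ k) := by
    rw [← hg, add_div, div_self hn1]
    ring
  linear_combination (∑ t : Fin m, cw m ^ (k * (t : ℕ))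
    * ((R n ω t - expVec μ (R n) t : ℝ) : ℂ)) * hg3

end StmtAux

theorem stmt12 {Ω : Type*} [MeasurableSpace Ω] (μ : Measure Ω) (m : ℕ) (hm : 2 ≤ m)
    (R : ℕ → Ω → Fin m → ℝ) (hR : IsCyclicUrn μ m ⟨0, by omega⟩ R)
    (k : ℕ) (hk : k < m) :
    (∀ n : ℕ, ∫ ω, Mart μ m k R n ω ∂μ = 0) ∧
    (∀ n : ℕ, μ[Mart μ m k R (n + 1) | urnFilt m R n] =ᵐ[μ] Mart μ m k R n) := by
  have hm0 : 0 < m := by omega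
  constructor
  · exact fun n => StmtAux.integral_Mart_zero hR hm0 k n
  · intro n
    rcases Nat.eq_zero_or_pos n with hn | hn
    · subst hn
      haveI := hR.isProb
      have hle := StmtAux.filt_le hR 0
      haveI : IsFiniteMeasure (μ.trim hle) := isFiniteMeasure_trim hle
      have h2 : μ[Mart μ m k R (0 + 1) | urnFilt m R 0]
          =ᵐ[μ] μ[(0 : Ω → ℂ) | urnFilt m R 0] :=
        condExp_congr_ae (StmtAux.Mart_one_ae_zero hR hm0 k)
      refine h2.trans ?_
      rw [condExp_zero]
      exact ae_of_all _ fun ω => by simp [Mart]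
    · exact StmtAux.main_step hR hm0 k hn

end
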